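/- Let Ω₂ ⊆ ℂ be open and let f : Ω₂ → ℂ be holomorphic with a simple zero at w₀ ∈ Ω₂ (i.e. f(w₀) = 0 and f′(w₀) ≠ 0). Then there exist r₀ > 0 and a holomorphic function h : D(0, r₀) → Ω₂ on the open disk of radius r₀ centered at 0 such that h(0) = w₀, h is injective on D(0, r₀) with open image (so h : D(0,r₀) → h(D(0,r₀)) is invertible with holomorphic inverse), and f′(w₀)·ζ·h′(ζ) = f(h(ζ)) for all ζ ∈ D(0, r₀). -/

import Mathlib

open Complex MeasureTheory Set Metric Topology
open scoped ContDiff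

/-- Pointwise partial derivative of `u` in the `x`-direction (junk value if it does not exist). -/
noncomputable def pdx (u : ℂ → ℂ) (z : ℂ) : ℂ := deriv (fun t : ℝ => u (z + ↑t)) 0

/-- Pointwise partial derivative of `u` in the `y`-direction (junk value if it does not exist). -/
noncomputable def pdy (u : ℂ → ℂ) (z : ℂ) : ℂ := deriv (fun t : ℝ => u (z + ↑t * Complex.I)) 0

/-- Both pointwise partial derivatives `u_x`, `u_y` exist at `z`. -/
def PartialsAt (u : ℂ → ℂ) (z : ℂ) : Prop :=
  (∃ a, HasDerivAt (fun t : ℝ => u (z + ↑t)) a 0) ∧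
  (∃ b, HasDerivAt (fun t : ℝ => u (z + ↑t * Complex.I)) b 0)

/-- The pointwise Wirtinger derivative `∂u/∂z̄ = (u_x + i u_y)/2`. -/
noncomputable def dzbar (u : ℂ → ℂ) (z : ℂ) : ℂ := (pdx u z + Complex.I * pdy u z) / 2

/-- The pointwise Wirtinger derivative `∂u/∂z = (u_x - i u_y)/2`. -/
noncomputable def dzz (u : ℂ → ℂ) (z : ℂ) : ℂ := (pdx u z - Complex.I * pdy u z) / 2

/-- Condition (*): the partial derivatives `u_x`, `u_y` exist at every point of `Ω`
except possibly at countably many points. -/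
def CondStar (u : ℂ → ℂ) (Ω : Set ℂ) : Prop :=
  ∃ S : Set ℂ, S.Countable ∧ ∀ z ∈ Ω \ S, PartialsAt u z

/-- The open rectangle `(a₁,b₁) × (a₂,b₂)` in `ℂ = ℝ²`. -/
def Rect (a₁ b₁ a₂ b₂ : ℝ) : Set ℂ := {z : ℂ | z.re ∈ Set.Ioo a₁ b₁ ∧ z.im ∈ Set.Ioo a₂ b₂}

/-- Lemma (lem4.5): a holomorphic substitution near a simple zero. -/
lemma exists_primitive {p : ℂ → ℂ} {w₀ : ℂ} (hp : AnalyticAt ℂ p w₀) :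
    ∃ ρ : ℝ, 0 < ρ ∧ ∃ Q : ℂ → ℂ, ∀ w ∈ ball w₀ ρ, HasDerivAt Q (p w) w := by
  obtain ⟨s, R, hR⟩ : ∃ s R, HasFPowerSeriesOnBall p s w₀ R := by
    obtain ⟨s, hs⟩ := hp
    obtain ⟨R, hR⟩ := hs
    exact ⟨s, R, hR⟩
  obtain ⟨r, hr0, hrR⟩ := ENNReal.lt_iff_exists_nnreal_btwn.mp hR.r_pos
  have hrpos : (0:ℝ) < r := by exact_mod_cast hr0
  set a : ℕ → ℂ := fun n => s.coeff n with ha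
  have hcoeff : ∀ n, ‖a n‖ ≤ ‖s n‖ := by
    intro n
    calc ‖a n‖ = ‖s n 1‖ := rfl
    _ ≤ ‖s n‖ * ∏ i : Fin n, ‖(1 : Fin n → ℂ) i‖ := (s n).le_opNorm 1
    _ = ‖s n‖ := by simp
  have hu : Summable fun n => ‖s n‖ * (r:ℝ)^n :=
    s.summable_norm_mul_pow (lt_of_lt_of_le hrR hR.r_le)
  set g : ℕ → ℂ → ℂ := fun n z => a n / (n+1) * (z - w₀)^(n+1) with hg
  set g' : ℕ → ℂ → ℂ := fun n z => a n * (z - w₀)^n with hg'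
  have hderiv : ∀ n z, z ∈ ball w₀ (r:ℝ) → HasDerivAt (g n) (g' n z) z := by
    intro n z _
    have h1 : HasDerivAt (fun z => (z - w₀)^(n+1)) ((n+1) * (z - w₀)^n) z := by
      simpa using (((hasDerivAt_id z).sub_const w₀).fun_pow (n+1))
    have this : HasDerivAt (g n) (a n / (n+1) * ((n+1) * (z - w₀)^n)) z :=
      h1.const_mul (a n / (n+1))
    convert this using 1
    have hne : ((n:ℂ)+1) ≠ 0 := Nat.cast_add_one_ne_zero n
    field_simp [hg']
    ring
  have hbound : ∀ n z, z ∈ ball w₀ (r:ℝ) → ‖g' n z‖ ≤ ‖s n‖ * (r:ℝ)^n := by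
    intro n z hz
    rw [mem_ball_iff_norm] at hz
    calc ‖g' n z‖ = ‖a n‖ * ‖z - w₀‖^n := by simp [hg', norm_pow]
    _ ≤ ‖s n‖ * (r:ℝ)^n := by
        exact mul_le_mul (hcoeff n) (pow_le_pow_left₀ (norm_nonneg _) hz.le n)
          (by positivity) (norm_nonneg _)
  have hsum0 : Summable fun n => g n w₀ := by
    apply summable_of_ne_finset_zero (s := ∅)
    intro n _
    simp [hg]
  refine ⟨r, hrpos, fun z => ∑' n, g n z, fun y hy => ?_⟩
  have key := hasDerivAt_tsum_of_isPreconnected hu isOpen_ball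
    (convex_ball w₀ (r:ℝ)).isPreconnected hderiv hbound
    (mem_ball_self hrpos) hsum0 hy
  have hsum : HasSum (fun n => g' n y) (p y) := by
    have hmem : y - w₀ ∈ Metric.eball (0:ℂ) R := by
      rw [mem_eball_zero_iff]
      calc (‖y - w₀‖₊ : ENNReal) < r := by
            exact_mod_cast (mem_ball_iff_norm.mp hy)
      _ < R := hrR
    have := hR.hasSum hmem
    simp only [FormalMultilinearSeries.apply_eq_pow_smul_coeff, smul_eq_mul,
      add_sub_cancel] at this
    replace this : HasSum (fun n => (y - w₀)^n * s.coeff n) (p y) := this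
    convert this using 2 with n
    simp [hg', ha, mul_comm]
  rwa [hsum.tsum_eq] at key

theorem stmt12 (Ω₂ : Set ℂ) (hΩ₂ : IsOpen Ω₂) (f : ℂ → ℂ)
    (hf : DifferentiableOn ℂ f Ω₂) (w₀ : ℂ) (hw₀ : w₀ ∈ Ω₂)
    (hzero : f w₀ = 0) (hsimple : deriv f w₀ ≠ 0) :
    ∃ r₀ : ℝ, 0 < r₀ ∧ ∃ h : ℂ → ℂ,
      DifferentiableOn ℂ h (ball (0 : ℂ) r₀) ∧
      MapsTo h (ball (0 : ℂ) r₀) Ω₂ ∧ h 0 = w₀ ∧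
      InjOn h (ball (0 : ℂ) r₀) ∧ IsOpen (h '' ball (0 : ℂ) r₀) ∧
      (∃ hinv : ℂ → ℂ, DifferentiableOn ℂ hinv (h '' ball (0 : ℂ) r₀) ∧
        ∀ ζ ∈ ball (0 : ℂ) r₀, hinv (h ζ) = ζ) ∧
      ∀ ζ ∈ ball (0 : ℂ) r₀, deriv f w₀ * ζ * deriv h ζ = f (h ζ) := by
  set c := deriv f w₀ with hc
  obtain ⟨ρ₁, hρ₁pos, hρ₁⟩ := Metric.isOpen_iff.mp hΩ₂ w₀ hw₀
  set d := dslope f w₀ with hd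
  have hdd : DifferentiableOn ℂ d (ball w₀ ρ₁) :=
    (Complex.differentiableOn_dslope (ball_mem_nhds w₀ hρ₁pos)).mpr (hf.mono hρ₁)
  have hdw₀ : d w₀ = c := dslope_same f w₀
  have hcont : ContinuousAt d w₀ :=
    ((hdd w₀ (mem_ball_self hρ₁pos)).differentiableAt
      (ball_mem_nhds w₀ hρ₁pos)).continuousAt
  obtain ⟨ρ₂, hρ₂pos, hρ₂le, hρ₂ne⟩ : ∃ ρ₂, 0 < ρ₂ ∧ ρ₂ ≤ ρ₁ ∧
      ∀ w ∈ ball w₀ ρ₂, d w ≠ 0 := by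
    have hev : ∀ᶠ w in 𝓝 w₀, d w ≠ 0 := hcont.eventually_ne (hdw₀ ▸ hsimple)
    obtain ⟨ε, hε, hball⟩ := Metric.eventually_nhds_iff_ball.mp hev
    exact ⟨min ε ρ₁, lt_min hε hρ₁pos, min_le_right _ _,
      fun w hw => hball w (ball_subset_ball (min_le_left _ _) hw)⟩
  set u : ℂ → ℂ := fun w => c / d w with hu
  have hud : DifferentiableOn ℂ u (ball w₀ ρ₂) :=
    (differentiableOn_const c).div (hdd.mono (ball_subset_ball hρ₂le)) hρ₂ne
  have huw₀ : u w₀ = 1 := by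
    simp only [hu, hdw₀]
    exact div_self hsimple
  set p := dslope u w₀ with hp
  have hpd : DifferentiableOn ℂ p (ball w₀ ρ₂) :=
    (Complex.differentiableOn_dslope (ball_mem_nhds w₀ hρ₂pos)).mpr hud
  have hpa : AnalyticAt ℂ p w₀ := hpd.analyticAt (ball_mem_nhds w₀ hρ₂pos)
  obtain ⟨ρ₄, hρ₄pos, Q, hQ⟩ := exists_primitive hpa
  set ρ₃ := min ρ₄ ρ₂ with hρ₃
  have hρ₃pos : 0 < ρ₃ := lt_min hρ₄pos hρ₂pos
  have hball₃₂ : ball w₀ ρ₃ ⊆ ball w₀ ρ₂ := ball_subset_ball (min_le_right _ _)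
  set g : ℂ → ℂ := fun w => (w - w₀) * Complex.exp (Q w) with hgdef
  have key1 : ∀ w ∈ ball w₀ ρ₃, HasDerivAt g (u w * Complex.exp (Q w)) w := by
    intro w hw
    have hQw := hQ w (ball_subset_ball (min_le_left _ _) hw)
    have h1 : HasDerivAt (fun w => Complex.exp (Q w)) (Complex.exp (Q w) * p w) w :=
      hQw.cexp
    have h2 : HasDerivAt (fun w : ℂ => w - w₀) 1 w := (hasDerivAt_id w).sub_const w₀
    have h3 : HasDerivAt g (1 * Complex.exp (Q w) + (w - w₀) * (Complex.exp (Q w) * p w)) w :=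
      h2.fun_mul h1
    convert h3 using 1
    have hsub : (w - w₀) * p w = u w - 1 := by
      have := sub_smul_dslope u w₀ w
      rw [smul_eq_mul, huw₀] at this
      exact this
    have huw : u w = 1 + (w - w₀) * p w := by rw [hsub]; ring
    rw [huw]; ring
  have key2 : ∀ w ∈ ball w₀ ρ₃, c * g w = f w * (u w * Complex.exp (Q w)) := by
    intro w hw
    have hfw : f w = (w - w₀) * d w := by
      have := sub_smul_dslope f w₀ w
      rw [smul_eq_mul, hzero, sub_zero] at this
      exact this.symm
    have hdne : d w ≠ 0 := hρ₂ne w (hball₃₂ hw)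
    rw [hfw]
    simp only [hgdef, hu]
    field_simp
  have hgd : DifferentiableOn ℂ g (ball w₀ ρ₃) := fun w hw =>
    ((key1 w hw).differentiableAt).differentiableWithinAt
  have hga : AnalyticAt ℂ g w₀ := hgd.analyticAt (ball_mem_nhds w₀ hρ₃pos)
  set G : ℂ → ℂ := fun w => u w * Complex.exp (Q w) with hG
  have hGne : ∀ w ∈ ball w₀ ρ₃, G w ≠ 0 := by
    intro w hw
    exact mul_ne_zero (div_ne_zero hsimple (hρ₂ne w (hball₃₂ hw))) (Complex.exp_ne_zero _)
  have hG₀ : G w₀ ≠ 0 := hGne w₀ (mem_ball_self hρ₃pos)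
  have hgw₀der : HasDerivAt g (G w₀) w₀ := key1 w₀ (mem_ball_self hρ₃pos)
  obtain ⟨ser, hser⟩ := hga
  have hstrict : HasStrictDerivAt g (G w₀) w₀ := by
    have hst := hser.hasStrictDerivAt
    have heq : (ser 1 fun _ => 1) = G w₀ := hser.hasDerivAt.unique hgw₀der
    rwa [heq] at hst
  set e := (hstrict.hasStrictFDerivAt_equiv hG₀).toOpenPartialHomeomorph g with he
  have hecoe : (e : ℂ → ℂ) = g :=
    (hstrict.hasStrictFDerivAt_equiv hG₀).toOpenPartialHomeomorph_coe
  have hw₀source : w₀ ∈ e.source :=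
    (hstrict.hasStrictFDerivAt_equiv hG₀).mem_toOpenPartialHomeomorph_source
  have hgw₀ : g w₀ = 0 := by simp [hgdef]
  have h0target : (0:ℂ) ∈ e.target := by
    have := (hstrict.hasStrictFDerivAt_equiv hG₀).image_mem_toOpenPartialHomeomorph_target
    rwa [hgw₀] at this
  have hew₀ : e w₀ = 0 := by rw [show (e : ℂ → ℂ) w₀ = g w₀ from congrFun hecoe w₀, hgw₀]
  have hsymm0 : e.symm 0 = w₀ := by
    have := e.left_inv hw₀source
    rwa [hew₀] at this
  set T := e.target ∩ e.symm ⁻¹' (ball w₀ ρ₃) with hT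
  have hTopen : IsOpen T := e.isOpen_inter_preimage_symm isOpen_ball
  have h0T : (0:ℂ) ∈ T := ⟨h0target, by
    simp only [mem_preimage, hsymm0]
    exact mem_ball_self hρ₃pos⟩
  obtain ⟨r₀, hr₀pos, hr₀sub⟩ := Metric.isOpen_iff.mp hTopen 0 h0T
  have hmem : ∀ ζ ∈ ball (0:ℂ) r₀, ζ ∈ e.target ∧ e.symm ζ ∈ ball w₀ ρ₃ := by
    intro ζ hζ
    exact ⟨(hr₀sub hζ).1, (hr₀sub hζ).2⟩
  have hGder : ∀ ζ ∈ ball (0:ℂ) r₀,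
      HasDerivAt (e.symm : ℂ → ℂ) (G (e.symm ζ))⁻¹ ζ := by
    intro ζ hζ
    refine e.hasDerivAt_symm (hmem ζ hζ).1 (hGne _ (hmem ζ hζ).2) ?_
    rw [hecoe]
    exact key1 _ (hmem ζ hζ).2
  refine ⟨r₀, hr₀pos, e.symm, ?_, ?_, hsymm0, ?_, ?_, ⟨g, ?_, ?_⟩, ?_⟩
  · exact fun ζ hζ => ((hGder ζ hζ).differentiableAt).differentiableWithinAt
  · intro ζ hζ
    exact hρ₁ (ball_subset_ball (le_trans (min_le_right _ _) hρ₂le) (hmem ζ hζ).2)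
  · refine e.symm.injOn.mono ?_
    rw [e.symm_source]
    exact fun ζ hζ => (hmem ζ hζ).1
  · refine e.symm.isOpen_image_of_subset_source isOpen_ball ?_
    rw [e.symm_source]
    exact fun ζ hζ => (hmem ζ hζ).1
  · refine hgd.mono ?_
    rintro z ⟨ζ, hζ, rfl⟩
    exact (hmem ζ hζ).2
  · intro ζ hζ
    have := e.right_inv (hmem ζ hζ).1
    rwa [show (e : ℂ → ℂ) (e.symm ζ) = g (e.symm ζ) from congrFun hecoe _] at this
  · intro ζ hζ
    have hde : deriv (e.symm : ℂ → ℂ) ζ = (G (e.symm ζ))⁻¹ := (hGder ζ hζ).deriv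
    have hζeq : g (e.symm ζ) = ζ := by
      have := e.right_inv (hmem ζ hζ).1
      rwa [show (e : ℂ → ℂ) (e.symm ζ) = g (e.symm ζ) from congrFun hecoe _] at this
    have hstep : c * ζ * (G (e.symm ζ))⁻¹ = c * g (e.symm ζ) * (G (e.symm ζ))⁻¹ := by
      rw [hζeq]
    rw [hde, hstep, key2 _ (hmem ζ hζ).2, mul_assoc,
      mul_inv_cancel₀ (hGne _ (hmem ζ hζ).2), mul_one]
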